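/- Let 0 ≤ α < 1 and μ = 5/(1-α) ≥ 4. If f : [0,∞) → ℝ is continuous, f̄(y) = sup_{z ∈ [0,y]} |f(z)|, and there are constants C₀,...,C₄ ≥ 0 with f̄(y) ≤ C₀ + C₁y + C₂y² + C₃y³ + C₄y⁴ + (1/5!) y⁵ f̄(y)^α for all y ≥ 0, then there exist constants C₀', C* > 0 (with C* depending only on α) such that f̄(y) ≤ C₀' + C* y^{5/(1-α)} for all y ≥ 0. -/

import Mathlib

open Set

/-- The running supremum of `|f|` on `[0,y]`. -/
noncomputable def runSup (f : ℝ → ℝ) (y : ℝ) : ℝ :=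
  sSup ((fun z => |f z|) '' Set.Icc 0 y)

lemma runSup_nonneg' (f : ℝ → ℝ) (hf : Continuous f) (y : ℝ) (hy : 0 ≤ y) :
    0 ≤ runSup f y := by
  have h0 : |f 0| ∈ (fun z => |f z|) '' Set.Icc 0 y := ⟨0, ⟨le_refl 0, hy⟩, rfl⟩
  have hbdd : BddAbove ((fun z => |f z|) '' Set.Icc 0 y) :=
    (isCompact_Icc.image (by continuity)).bddAbove
  exact le_trans (abs_nonneg _) (le_csSup hbdd h0)

/-- If `F ≤ A + B F^α` with `0 ≤ α < 1`, then `F ≤ 2A + (2B)^{1/(1-α)}`. -/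
lemma absorb (α A B F : ℝ) (hα1 : α < 1) (hA : 0 ≤ A) (hB : 0 ≤ B)
    (hF : 0 ≤ F) (h : F ≤ A + B * F ^ α) :
    F ≤ 2 * A + (2 * B) ^ (1 / (1 - α)) := by
  have h1α : 0 < 1 - α := by linarith
  set G : ℝ := (2 * B) ^ (1 / (1 - α)) with hG
  have hG0 : 0 ≤ G := Real.rpow_nonneg (by linarith) _
  rcases le_or_gt F G with hFG | hFG
  · linarith
  · have hFpos : 0 < F := lt_of_le_of_lt hG0 hFG
    have hGB : G ^ (1 - α) = 2 * B := by
      rw [hG, ← Real.rpow_mul (by linarith), one_div_mul_cancel (ne_of_gt h1α),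
        Real.rpow_one]
    have hlt : 2 * B < F ^ (1 - α) := by
      rw [← hGB]
      exact Real.rpow_lt_rpow hG0 hFG h1α
    have hmul : F ^ (1 - α) * F ^ α = F := by
      rw [← Real.rpow_add hFpos]
      simp
    have hBF : B * F ^ α < F / 2 := by
      have hFα : 0 < F ^ α := Real.rpow_pos_of_pos hFpos α
      have := mul_lt_mul_of_pos_right hlt hFα
      rw [hmul] at this
      linarith
    linarith

set_option maxHeartbeats 1000000 in
/-- Dissipativity estimate: for `0 ≤ α < 1` with `μ = 5/(1-α) ≥ 4`, there is
a constant `C*` depending only on `α` such that any continuous `f` whose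
running supremum `f̄` satisfies
`f̄(y) ≤ C₀ + C₁ y + C₂ y² + C₃ y³ + C₄ y⁴ + y⁵ f̄(y)^α / 5!` obeys
`f̄(y) ≤ C₀' + C* y^{5/(1-α)}`. -/
theorem stmt4 (α : ℝ) (hα : α ∈ Ico (0 : ℝ) 1) (hμ : 4 ≤ 5 / (1 - α)) :
    ∃ Cstar : ℝ, 0 < Cstar ∧
      ∀ (f : ℝ → ℝ) (C₀ C₁ C₂ C₃ C₄ : ℝ), Continuous f →
        0 ≤ C₀ → 0 ≤ C₁ → 0 ≤ C₂ → 0 ≤ C₃ → 0 ≤ C₄ →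
        (∀ y : ℝ, 0 ≤ y → runSup f y ≤
          C₀ + C₁ * y + C₂ * y ^ 2 + C₃ * y ^ 3 + C₄ * y ^ 4 +
            (1 / 120) * y ^ 5 * (runSup f y) ^ α) →
        ∃ C₀' : ℝ, 0 < C₀' ∧
          ∀ y : ℝ, 0 ≤ y → runSup f y ≤ C₀' + Cstar * y ^ (5 / (1 - α)) := by
  obtain ⟨hα0, hα1⟩ := hα
  have h1α : 0 < 1 - α := by linarith
  set ν : ℝ := 1 / (1 - α) with hν
  have hν0 : 0 < ν := by positivity
  clear_value ν
  have hμ5 : (5 : ℝ) ≤ 5 / (1 - α) := by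
    rw [le_div_iff₀ h1α]; nlinarith
  refine ⟨(1 / 60 : ℝ) ^ ν + 1, by positivity, ?_⟩
  intro f C₀ C₁ C₂ C₃ C₄ hf hC₀ hC₁ hC₂ hC₃ hC₄ hbd
  set S : ℝ := C₀ + C₁ + C₂ + C₃ + C₄ with hS
  clear_value S
  have hS0 : 0 ≤ S := by linarith
  set T : ℝ := 2 * S + 1 with hT
  clear_value T
  have hT1 : 1 ≤ T := by linarith
  have hT0 : 0 ≤ T := by linarith
  have hT40 : (0:ℝ) ≤ T ^ 4 := pow_nonneg hT0 4
  refine ⟨2 * S * (1 + T ^ 4) + 1, by nlinarith, ?_⟩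
  intro y hy
  have hb := hbd y hy
  have hF0 : 0 ≤ runSup f y := runSup_nonneg' f hf y hy
  set F : ℝ := runSup f y with hFdef
  clear_value F
  set μ : ℝ := 5 / (1 - α) with hμdef
  clear_value μ
  have hyμ : 0 ≤ y ^ μ := Real.rpow_nonneg hy μ
  -- polynomial bound: P ≤ S * (1 + y^4)
  have hpow : ∀ i : ℕ, i ≤ 4 → y ^ i ≤ 1 + y ^ 4 := by
    intro i hi
    rcases le_or_gt y 1 with hy1 | hy1
    · have : y ^ i ≤ 1 := pow_le_one₀ hy hy1
      nlinarith [pow_nonneg hy 4]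
    · have : y ^ i ≤ y ^ 4 := pow_le_pow_right₀ (le_of_lt hy1) hi
      linarith
  have hP : C₀ + C₁ * y + C₂ * y ^ 2 + C₃ * y ^ 3 + C₄ * y ^ 4 ≤ S * (1 + y ^ 4) := by
    have h1 := hpow 1 (by norm_num)
    have h2 := hpow 2 (by norm_num)
    have h3 := hpow 3 (by norm_num)
    have h4 := hpow 4 (by norm_num)
    simp only [pow_one] at h1
    nlinarith [mul_le_mul_of_nonneg_left h1 hC₁, mul_le_mul_of_nonneg_left h2 hC₂,
      mul_le_mul_of_nonneg_left h3 hC₃, mul_le_mul_of_nonneg_left h4 hC₄,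
      pow_nonneg hy 4]
  -- absorb step
  have habs : F ≤ 2 * (S * (1 + y ^ 4)) + (2 * ((1 / 120) * y ^ 5)) ^ ν := by
    rw [hν]
    apply absorb α _ _ F hα1 (by nlinarith [pow_nonneg hy 4]) (by positivity) hF0
    calc F ≤ C₀ + C₁ * y + C₂ * y ^ 2 + C₃ * y ^ 3 + C₄ * y ^ 4 +
        (1 / 120) * y ^ 5 * F ^ α := hb
      _ ≤ S * (1 + y ^ 4) + (1 / 120) * y ^ 5 * F ^ α := by linarith
  -- rewrite the rpow term
  have hrw : (2 * ((1 / 120) * y ^ 5)) ^ ν = (1 / 60 : ℝ) ^ ν * y ^ μ := by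
    have h5 : (2 * ((1 / 120) * y ^ 5)) = (1 / 60) * y ^ 5 := by ring
    rw [h5, Real.mul_rpow (by norm_num) (pow_nonneg hy 5)]
    congr 1
    rw [show y ^ (5:ℕ) = y ^ ((5:ℕ):ℝ) from (Real.rpow_natCast y 5).symm,
      ← Real.rpow_mul hy]
    congr 1
    rw [hμdef, hν]
    push_cast
    ring
  -- bound 2 S (1 + y^4) ≤ 2 S (1 + T^4) + y^μ
  have hpoly : 2 * S * (1 + y ^ 4) ≤ 2 * S * (1 + T ^ 4) + y ^ μ := by
    rcases le_or_gt y T with hyT | hyT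
    · have h4T : y ^ 4 ≤ T ^ 4 := pow_le_pow_left₀ hy hyT 4
      have h2S : (0:ℝ) ≤ 2 * S := by linarith
      have := mul_le_mul_of_nonneg_left h4T h2S
      linarith
    · have hy1 : 1 ≤ y := le_trans hT1 (le_of_lt hyT)
      have hypos : 0 < y := by linarith
      have hsplit : y ^ μ = y ^ (4 : ℝ) * y ^ (μ - 4) := by
        rw [← Real.rpow_add hypos]; ring_nf
      have hy4 : y ^ (4 : ℝ) = y ^ (4 : ℕ) := by
        rw [show (4:ℝ) = ((4:ℕ):ℝ) by norm_num]
        exact Real.rpow_natCast y 4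
      have hexp : 2 * S < y ^ (μ - 4) := by
        have h1 : y ^ (1 : ℝ) ≤ y ^ (μ - 4) :=
          Real.rpow_le_rpow_of_exponent_le hy1 (by rw [hμdef]; linarith)
        rw [Real.rpow_one] at h1
        linarith
      have hy4n : (0:ℝ) ≤ y ^ (4:ℕ) := pow_nonneg hy 4
      have h2Sy : 2 * S * y ^ 4 ≤ y ^ μ := by
        rw [hsplit, hy4]
        nlinarith [mul_le_mul_of_nonneg_left hexp.le hy4n]
      nlinarith
  rw [hrw] at habs
  have hc0 : (0:ℝ) ≤ (1 / 60 : ℝ) ^ ν := Real.rpow_nonneg (by norm_num) ν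
  calc F ≤ 2 * (S * (1 + y ^ 4)) + (1 / 60 : ℝ) ^ ν * y ^ μ := habs
    _ ≤ (2 * S * (1 + T ^ 4) + y ^ μ) + (1 / 60 : ℝ) ^ ν * y ^ μ := by
        have h' : 2 * (S * (1 + y ^ 4)) = 2 * S * (1 + y ^ 4) := by ring
        rw [h']; linarith
    _ ≤ (2 * S * (1 + T ^ 4) + 1) + ((1 / 60 : ℝ) ^ ν + 1) * y ^ μ := by nlinarith
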